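/- Let n be a positive integer, Q a symmetric n×n real matrix, μ ∈ ℝⁿ, ρ ∈ ℝ, u ∈ ℝⁿ, and ℵ a natural number. Suppose X̄* = [[1, (x*)ᵀ, (y*)ᵀ], [x*, X*, (Z*)ᵀ], [y*, Z*, Y*]] is an optimal solution of the SDP relaxation (it is feasible and its objective ⟨Q, X*⟩ is less than or equal to the objective ⟨Q, X⟩ of every feasible point of the SDP relaxation), and that X̄* has rank one. Then (x*, y*) is feasible for the MIQP and x* is an optimal solution of the MIQP: for every (x, y) feasible for the MIQP, (x*)ᵀQx* ≤ xᵀQx. -/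

import Mathlib

open Matrix

/-- A rank-one matrix with a unit diagonal entry factors entrywise. -/
lemma rank_one_entries {m : Type*} [Fintype m] [DecidableEq m]
    (M : Matrix m m ℝ) (e : m) (he : M e e = 1) (hr : M.rank = 1) :
    ∀ i j, M i j = M i e * M e j := by
  have hcol : ∀ k : m, M.mulVec (Pi.single k 1) ∈ LinearMap.range M.mulVecLin := by
    intro k; exact ⟨Pi.single k 1, rfl⟩
  set c0 : m → ℝ := M.mulVec (Pi.single e 1) with hc0
  have hc0app : ∀ i, c0 i = M i e := by intro i; simp [hc0]
  have hc0e : c0 e = 1 := by rw [hc0app]; exact he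
  have hc0ne : c0 ≠ 0 := fun h => by simp [h] at hc0e
  have hspan : Submodule.span ℝ {c0} ≤ LinearMap.range M.mulVecLin :=
    Submodule.span_le.2 (Set.singleton_subset_iff.2 (hcol e))
  have hfr : Module.finrank ℝ (Submodule.span ℝ ({c0} : Set (m → ℝ))) = 1 :=
    finrank_span_singleton hc0ne
  have heq : Submodule.span ℝ ({c0} : Set (m → ℝ)) = LinearMap.range M.mulVecLin := by
    apply Submodule.eq_of_le_of_finrank_eq hspan
    rw [hfr]
    exact hr.symm
  intro i j
  have hj : M.mulVec (Pi.single j 1) ∈ Submodule.span ℝ ({c0} : Set (m → ℝ)) := by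
    rw [heq]; exact hcol j
  obtain ⟨c, hc⟩ := Submodule.mem_span_singleton.1 hj
  have hce : c = M e j := by
    have := congrFun hc e
    simpa [hc0e] using this
  have := congrFun hc i
  simp only [Pi.smul_apply, smul_eq_mul, mulVec_single, MulOpposite.op_one, one_smul, col_apply, mul_one] at this
  rw [hc0app] at this
  rw [← this, hce]; ring

/-- Trace formula for the outer-product objective. -/
lemma trace_outer (n : ℕ) (Q : Matrix (Fin n) (Fin n) ℝ) (x : Fin n → ℝ) :
    Matrix.trace ((vecMulVec x x)ᵀ * Q) = x ⬝ᵥ Q.mulVec x := by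
  simp only [Matrix.trace, diag, mul_apply, transpose_apply, vecMulVec_apply,
    dotProduct, mulVec]
  rw [Finset.sum_comm]
  apply Finset.sum_congr rfl
  intro i _
  rw [Finset.mul_sum]
  apply Finset.sum_congr rfl
  intro j _
  ring

/-- An outer product `v vᵀ` of a real vector with itself is positive semidefinite. -/
lemma outer_psd {m : Type*} [Fintype m] (v : m → ℝ) : (vecMulVec v v).PosSemidef := by
  have h : vecMulVec v v = (replicateRow Unit v)ᴴ * replicateRow Unit v := by
    rw [conjTranspose_replicateRow, star_trivial, ← vecMulVec_eq Unit]
  rw [h]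
  exact posSemidef_conjTranspose_mul_self _

/-- The `(2n+1) × (2n+1)` arrow matrix `[[1, xᵀ, yᵀ], [x, X, Zᵀ], [y, Z, Y]]`,
indexed by `Unit ⊕ (Fin n ⊕ Fin n)`; `Z` is the block in the `y`-row, `x`-column. -/
def arrowMat (n : ℕ) (x y : Fin n → ℝ) (X Y Z : Matrix (Fin n) (Fin n) ℝ) :
    Matrix (Unit ⊕ (Fin n ⊕ Fin n)) (Unit ⊕ (Fin n ⊕ Fin n)) ℝ :=
  fun i j =>
    match i, j with
    | Sum.inl _, Sum.inl _ => 1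
    | Sum.inl _, Sum.inr (Sum.inl k) => x k
    | Sum.inl _, Sum.inr (Sum.inr k) => y k
    | Sum.inr (Sum.inl k), Sum.inl _ => x k
    | Sum.inr (Sum.inl k), Sum.inr (Sum.inl l) => X k l
    | Sum.inr (Sum.inl k), Sum.inr (Sum.inr l) => Z l k
    | Sum.inr (Sum.inr k), Sum.inl _ => y k
    | Sum.inr (Sum.inr k), Sum.inr (Sum.inl l) => Z k l
    | Sum.inr (Sum.inr k), Sum.inr (Sum.inr l) => Y k l

/-- Feasibility of `X̄ = [[1, xᵀ, yᵀ], [x, X, Zᵀ], [y, Z, Y]]` for the SDP relaxation. -/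
def SDPFeasible (n ℵ : ℕ) (μ u : Fin n → ℝ) (ρ : ℝ)
    (x y : Fin n → ℝ) (X Y Z : Matrix (Fin n) (Fin n) ℝ) : Prop :=
  (arrowMat n x y X Y Z).PosSemidef ∧
  μ ⬝ᵥ x ≥ ρ ∧ (∑ i, x i ≤ 1) ∧ (∑ i, y i ≥ (n : ℝ) - (ℵ : ℝ)) ∧
  (∀ i, Z i i = 0) ∧ (∀ i, Y i i = y i) ∧ (∀ i, 0 ≤ x i ∧ x i ≤ u i)

/-- Feasibility of `(x, y)` for the MIQP. -/
def MIQPFeasible (n ℵ : ℕ) (μ u : Fin n → ℝ) (ρ : ℝ) (x y : Fin n → ℝ) : Prop :=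
  μ ⬝ᵥ x ≥ ρ ∧ (∑ i, x i ≤ 1) ∧ (∑ i, y i ≥ (n : ℝ) - (ℵ : ℝ)) ∧
  (∀ i, x i * y i = 0) ∧ (∀ i, y i = 0 ∨ y i = 1) ∧ (∀ i, 0 ≤ x i ∧ x i ≤ u i)

/-- The arrow matrix built from outer products is itself an outer product. -/
lemma arrowMat_outer (n : ℕ) (x y : Fin n → ℝ) :
    arrowMat n x y (vecMulVec x x) (vecMulVec y y) (vecMulVec y x)
      = vecMulVec (Sum.elim (fun _ : Unit => (1 : ℝ)) (Sum.elim x y))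
          (Sum.elim (fun _ : Unit => (1 : ℝ)) (Sum.elim x y)) := by
  ext i j
  rcases i with _ | (k | k) <;> rcases j with _ | (l | l) <;>
    simp [arrowMat, vecMulVec_apply] <;> ring

theorem rank_one_sdp_optimal_solves_miqp (n : ℕ) (hn : 0 < n)
    (Q : Matrix (Fin n) (Fin n) ℝ) (hQ : Q.IsSymm)
    (μ : Fin n → ℝ) (ρ : ℝ) (u : Fin n → ℝ) (ℵ : ℕ)
    (xs ys : Fin n → ℝ) (Xs Ys Zs : Matrix (Fin n) (Fin n) ℝ)
    (hfeas : SDPFeasible n ℵ μ u ρ xs ys Xs Ys Zs)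
    (hopt : ∀ (x y : Fin n → ℝ) (X Y Z : Matrix (Fin n) (Fin n) ℝ),
      SDPFeasible n ℵ μ u ρ x y X Y Z →
        Matrix.trace (Xsᵀ * Q) ≤ Matrix.trace (Xᵀ * Q))
    (hrank : (arrowMat n xs ys Xs Ys Zs).rank = 1) :
    MIQPFeasible n ℵ μ u ρ xs ys ∧
    ∀ x y : Fin n → ℝ, MIQPFeasible n ℵ μ u ρ x y →
      xs ⬝ᵥ Q.mulVec xs ≤ x ⬝ᵥ Q.mulVec x := by
  obtain ⟨hpsd, hmu, hsum, hcard, hZ, hY, hbox⟩ := hfeas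
  set M := arrowMat n xs ys Xs Ys Zs with hM
  have hMfac := rank_one_entries M (Sum.inl ()) rfl hrank
  have hXs : ∀ i j, Xs i j = xs i * xs j := fun i j =>
    hMfac (Sum.inr (Sum.inl i)) (Sum.inr (Sum.inl j))
  have hYs : ∀ i, Ys i i = ys i * ys i := fun i =>
    hMfac (Sum.inr (Sum.inr i)) (Sum.inr (Sum.inr i))
  have hZs : ∀ i j, Zs i j = ys i * xs j := fun i j =>
    hMfac (Sum.inr (Sum.inr i)) (Sum.inr (Sum.inl j))
  have hy01 : ∀ i, ys i = 0 ∨ ys i = 1 := by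
    intro i
    have hsq : ys i * ys i = ys i := by rw [← hYs i]; exact hY i
    have : ys i * (ys i - 1) = 0 := by rw [mul_sub, mul_one, hsq, sub_self]
    rcases mul_eq_zero.1 this with h | h
    · exact Or.inl h
    · exact Or.inr (by linarith)
  have hxy0 : ∀ i, xs i * ys i = 0 := by
    intro i
    have := hZ i
    rw [hZs i i] at this
    linarith [this]
  have hXseq : Xs = vecMulVec xs xs := by
    ext i j; rw [hXs i j, vecMulVec_apply]
  refine ⟨⟨hmu, hsum, hcard, hxy0, hy01, hbox⟩, ?_⟩
  intro x y hxy
  obtain ⟨hmu', hsum', hcard', hxy0', hy01', hbox'⟩ := hxy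
  have hsdp : SDPFeasible n ℵ μ u ρ x y (vecMulVec x x) (vecMulVec y y) (vecMulVec y x) := by
    refine ⟨?_, hmu', hsum', hcard', ?_, ?_, hbox'⟩
    · rw [arrowMat_outer]; exact outer_psd _
    · intro i; rw [vecMulVec_apply]
      have := hxy0' i; linarith
    · intro i; rw [vecMulVec_apply]
      rcases hy01' i with h | h <;> rw [h] <;> ring
  have := hopt x y _ _ _ hsdp
  rwa [hXseq, trace_outer, trace_outer] at this
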